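/- Let X be a real Hilbert space and F: X → X a linear bijection. Let A: X ⇉ X be a monotone operator whose F-resolvent T_A = (A+F)^{-1}F is single-valued with full domain, and similarly for T_{A^{-1}} = (A^{-1}+F^{-1})^{-1}F^{-1}. Then T_{A^{-1}} = Id − F ∘ T_A ∘ F^{-1}. -/

import Mathlib

/-- In Hilbert space, for a linear bijection `F` and monotone `A` with single-valued
full-domain resolvents, `T_{A⁻¹} = Id − F ∘ T_A ∘ F⁻¹`. -/
theorem stmt_10 {X : Type*} [NormedAddCommGroup X] [InnerProductSpace ℝ X] [CompleteSpace X]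
    (F : X ≃L[ℝ] X)
    (A : X → Set X)
    (hA : ∀ x y x' y', x' ∈ A x → y' ∈ A y →
      (0:ℝ) ≤ inner ℝ (x - y) (x' - y'))
    (TA : X → X) (hTA : ∀ w u, TA w = u ↔ F w - F u ∈ A u)
    (TAi : X → X)
    (hTAi : ∀ w u, TAi w = u ↔ u ∈ A (F.symm w - F.symm u)) :
    ∀ x : X, TAi x = x - F (TA (F.symm x)) := by
  intro x
  set t := TA (F.symm x) with ht
  have h1 : F (F.symm x) - F t ∈ A t := (hTA (F.symm x) t).mp rfl
  rw [hTAi]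
  have : F.symm x - F.symm (x - F t) = t := by
    simp [map_sub]
  rw [this]
  simpa using h1
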